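/- arXiv:2508.15775 — 6 statements merged into one kernel-verified Lean document; each statement's English description precedes it below -/
import Mathlib

section
/- Let T: V→g be a Φ-twisted Rota-Baxter operator on a 3-Leibniz algebra (g,[·,·,·]_g) with respect to a representation (V; ρ^l, ρ^m, ρ^r). Then the bracket [u,v,w]_T := ρ^l(Tu,Tv,w) + ρ^m(Tu,v,Tw) + ρ^r(u,Tv,Tw) + Φ(Tu,Tv,Tw) makes V into a 3-Leibniz algebra, and T is a morphism of 3-Leibniz algebras from (V,[·,·,·]_T) to g, i.e. T[u,v,w]_T = [Tu,Tv,Tw]_g. -/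
open Finset

variable {K : Type*} [Field K]

/-- The (left) Leibniz identity for a binary bracket. -/
def LeibnizRule {A : Type*} [Add A] (br : A → A → A) : Prop :=
  ∀ x y z, br x (br y z) = br (br x y) z + br y (br x z)

/-- The fundamental identity of a 3-Leibniz algebra. -/
def ThreeLeibnizRule {A : Type*} [Add A] (br : A → A → A → A) : Prop :=
  ∀ a b x y z, br a b (br x y z) = br (br a b x) y z + br x (br a b y) z + br x y (br a b z)

/-- Representation of a 3-Leibniz algebra: the five compatibility equations. -/
def IsRep3 {g V : Type*} [Add g] [Add V]
    (br : g → g → g → g) (ρl : g → g → V → V) (ρm : g → V → g → V) (ρr : V → g → g → V) : Prop :=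
  (∀ a b x y u, ρl a b (ρl x y u) = ρl (br a b x) y u + ρl x (br a b y) u + ρl x y (ρl a b u)) ∧
  (∀ a b x u z, ρl a b (ρm x u z) = ρm (br a b x) u z + ρm x (ρl a b u) z + ρm x u (br a b z)) ∧
  (∀ a b u y z, ρl a b (ρr u y z) = ρr (ρl a b u) y z + ρr u (br a b y) z + ρr u y (br a b z)) ∧
  (∀ a u x y z, ρm a u (br x y z) = ρr (ρm a u x) y z + ρm x (ρm a u y) z + ρl x y (ρm a u z)) ∧
  (∀ u b x y z, ρr u b (br x y z) = ρr (ρr u b x) y z + ρm x (ρr u b y) z + ρl x y (ρr u b z))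

/-- 2-cocycle condition for `Φ` in the 3-Leibniz cohomology. -/
def Is2Cocycle {g V : Type*} [Add g] [AddCommGroup V]
    (br : g → g → g → g) (ρl : g → g → V → V) (ρm : g → V → g → V) (ρr : V → g → g → V)
    (Φ : g → g → g → V) : Prop :=
  ∀ x1 y1 x2 y2 z,
    Φ x1 y1 (br x2 y2 z) - Φ x2 (br x1 y1 y2) z - Φ (br x1 y1 x2) y2 z - Φ x2 y2 (br x1 y1 z)
      + ρl x1 y1 (Φ x2 y2 z) - ρl x2 y2 (Φ x1 y1 z) - ρm x2 (Φ x1 y1 y2) z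
      - ρr (Φ x1 y1 x2) y2 z = 0

/-- `T` is a `Φ`-twisted Rota-Baxter operator. -/
def IsTRB {g V : Type*} [Add g] [Add V]
    (br : g → g → g → g) (ρl : g → g → V → V) (ρm : g → V → g → V) (ρr : V → g → g → V)
    (Φ : g → g → g → V) (T : V → g) : Prop :=
  ∀ u v w, br (T u) (T v) (T w)
    = T (ρl (T u) (T v) w + ρm (T u) v (T w) + ρr u (T v) (T w) + Φ (T u) (T v) (T w))

/-- NS-3-Leibniz algebra: four ternary operations `◁ = tl`, `▷ = tr`, `△ = tt`, `◇ = td`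
satisfying the six defining identities, where `⋆` is the sum of the four operations. -/
def IsNS3Leibniz {g : Type*} [Add g] (tl tr tt td : g → g → g → g) : Prop :=
  let ts : g → g → g → g := fun x y z => tl x y z + tr x y z + tt x y z + td x y z
  (∀ a b x y z, tr a b (tr x y z) = tr (ts a b x) y z + tr x (ts a b y) z + tr x y (tr a b z)) ∧
  (∀ a b x y z, tl a b (ts x y z) = tl (tl a b x) y z + tt x (tl a b y) z + tr x y (tl a b z)) ∧
  (∀ a b x y z, tt a b (ts x y z) = tl (tt a b x) y z + tt x (tt a b y) z + tr x y (tt a b z)) ∧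
  (∀ a b x y z, tr a b (tl x y z) = tl (tr a b x) y z + tl x (ts a b y) z + tl x y (ts a b z)) ∧
  (∀ a b x y z, tr a b (td x y z) = tt (ts a b x) y z + tt x (tr a b y) z + tt x y (ts a b z)) ∧
  (∀ a b x y z, td a b (ts x y z) + tr a b (td x y z)
    = tr x y (td a b z) + td x y (ts a b z) + tt x (td a b y) z + td x (ts a b y) z
      + td (ts a b x) y z + tl (td a b x) y z)

set_option maxHeartbeats 3200000 in
theorem stmt6 {g : Type*} [AddCommGroup g] [Module K g] {V : Type*} [AddCommGroup V] [Module K V]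
    (br : g →ₗ[K] g →ₗ[K] g →ₗ[K] g)
    (h3 : ThreeLeibnizRule (fun x y z : g => br x y z))
    (ρl : g →ₗ[K] g →ₗ[K] V →ₗ[K] V) (ρm : g →ₗ[K] V →ₗ[K] g →ₗ[K] V)
    (ρr : V →ₗ[K] g →ₗ[K] g →ₗ[K] V)
    (hrep : IsRep3 (fun x y z : g => br x y z) (fun x y u => ρl x y u)
      (fun x u y => ρm x u y) (fun u x y => ρr u x y))
    (Φ : g →ₗ[K] g →ₗ[K] g →ₗ[K] V)
    (hΦ : Is2Cocycle (fun x y z : g => br x y z) (fun x y u => ρl x y u)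
      (fun x u y => ρm x u y) (fun u x y => ρr u x y) (fun x y z => Φ x y z))
    (T : V →ₗ[K] g)
    (hT : IsTRB (fun x y z : g => br x y z) (fun x y u => ρl x y u)
      (fun x u y => ρm x u y) (fun u x y => ρr u x y) (fun x y z => Φ x y z)
      (fun u => T u)) :
    ThreeLeibnizRule (fun u v w : V =>
        ρl (T u) (T v) w + ρm (T u) v (T w) + ρr u (T v) (T w) + Φ (T u) (T v) (T w)) ∧
    ∀ u v w : V,
      T (ρl (T u) (T v) w + ρm (T u) v (T w) + ρr u (T v) (T w) + Φ (T u) (T v) (T w))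
        = br (T u) (T v) (T w) := by

  obtain ⟨hr1, hr2, hr3, hr4, hr5⟩ := hrep
  rw [ThreeLeibnizRule]
  rw [IsTRB] at hT
  rw [Is2Cocycle] at hΦ
  simp only at hT hΦ hr1 hr2 hr3 hr4 hr5
  have hTb : ∀ u v w : V,
      T (ρl (T u) (T v) w + ρm (T u) v (T w) + ρr u (T v) (T w) + Φ (T u) (T v) (T w))
        = br (T u) (T v) (T w) := fun u v w => (hT u v w).symm
  refine ⟨fun a b x y z => ?_, hTb⟩
  have hc : Φ (T a) (T b) (br (T x) (T y) (T z))
      = Φ (T x) (br (T a) (T b) (T y)) (T z) + Φ (br (T a) (T b) (T x)) (T y) (T z)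
        + Φ (T x) (T y) (br (T a) (T b) (T z)) - ρl (T a) (T b) (Φ (T x) (T y) (T z))
        + ρl (T x) (T y) (Φ (T a) (T b) (T z)) + ρm (T x) (Φ (T a) (T b) (T y)) (T z)
        + ρr (Φ (T a) (T b) (T x)) (T y) (T z) := by
    have h := hΦ (T a) (T b) (T x) (T y) (T z)
    rw [← sub_eq_zero, ← h]; abel
  simp only [hTb, map_add, LinearMap.add_apply]
  rw [hr1 (T a) (T b) (T x) (T y) z, hr2 (T a) (T b) (T x) y (T z),
    hr3 (T a) (T b) x (T y) (T z), hr4 (T a) b (T x) (T y) (T z),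
    hr5 a (T b) (T x) (T y) (T z), hc]
  abel
end

section
/- Let T: V→g be a Φ-twisted Rota-Baxter operator and ϖ: g→V a linear map such that Id_V − ϖ∘T is invertible. Then T∘(Id_V − ϖ∘T)^{-1}: V→g is a (Φ+δϖ)-twisted Rota-Baxter operator. -/
open Finset

variable {K : Type*} [Field K]

theorem stmt8 {g : Type*} [AddCommGroup g] [Module K g] {V : Type*} [AddCommGroup V] [Module K V]
    (br : g →ₗ[K] g →ₗ[K] g →ₗ[K] g)
    (h3 : ThreeLeibnizRule (fun x y z : g => br x y z))
    (ρl : g →ₗ[K] g →ₗ[K] V →ₗ[K] V) (ρm : g →ₗ[K] V →ₗ[K] g →ₗ[K] V)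
    (ρr : V →ₗ[K] g →ₗ[K] g →ₗ[K] V)
    (hrep : IsRep3 (fun x y z : g => br x y z) (fun x y u => ρl x y u)
      (fun x u y => ρm x u y) (fun u x y => ρr u x y))
    (Φ : g →ₗ[K] g →ₗ[K] g →ₗ[K] V)
    (hΦ : Is2Cocycle (fun x y z : g => br x y z) (fun x y u => ρl x y u)
      (fun x u y => ρm x u y) (fun u x y => ρr u x y) (fun x y z => Φ x y z))
    (T : V →ₗ[K] g)
    (hT : IsTRB (fun x y z : g => br x y z) (fun x y u => ρl x y u)
      (fun x u y => ρm x u y) (fun u x y => ρr u x y) (fun x y z => Φ x y z)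
      (fun u => T u))
    (ϖ : g →ₗ[K] V) (S : V →ₗ[K] V)
    (hS1 : (LinearMap.id - ϖ ∘ₗ T) ∘ₗ S = LinearMap.id)
    (hS2 : S ∘ₗ (LinearMap.id - ϖ ∘ₗ T) = LinearMap.id) :
    IsTRB (fun x y z : g => br x y z) (fun x y u => ρl x y u)
      (fun x u y => ρm x u y) (fun u x y => ρr u x y)
      (fun x y z => Φ x y z
        + (-ϖ (br x y z) + ρl x y (ϖ z) + ρm x (ϖ y) z + ρr (ϖ x) y z))
      (fun u => T (S u)) := by
  have h1 : ∀ x : V, S x - ϖ (T (S x)) = x := by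
    intro x
    simpa using LinearMap.congr_fun hS1 x
  have h2 : ∀ x : V, S (x - ϖ (T x)) = x := by
    intro x
    simpa using LinearMap.congr_fun hS2 x
  intro u v w
  have hbr := hT (S u) (S v) (S w)
  set a := T (S u) with ha
  set b := T (S v) with hb
  set c := T (S w) with hc
  set Y := ρl a b (S w) + ρm a (S v) c + ρr (S u) b c + Φ a b c with hY
  have hbr' : br a b c = T Y := hbr
  have harg : ρl a b w + ρm a v c + ρr u b c
      + (Φ a b c + (-ϖ (br a b c) + ρl a b (ϖ c) + ρm a (ϖ b) c + ρr (ϖ a) b c))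
      = Y - ϖ (T Y) := by
    rw [← hbr']
    conv_lhs => rw [← h1 u, ← h1 v, ← h1 w]
    rw [hY]
    simp only [map_sub, LinearMap.sub_apply, ← ha, ← hb, ← hc]
    abel
  show br a b c = T (S (ρl a b w + ρm a v c + ρr u b c
      + (Φ a b c + (-ϖ (br a b c) + ρl a b (ϖ c) + ρm a (ϖ b) c + ρr (ϖ a) b c))))
  rw [harg, h2, hbr']
end

section
/- Let T: V→g be a Φ-twisted Rota-Baxter operator and ϖ: g→V a 1-cocycle (δϖ = 0) such that Id_V + ϖ∘T is invertible. Then T_ϖ := T∘(Id_V + ϖ∘T)^{-1}: V→g is again a Φ-twisted Rota-Baxter operator. -/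
open Finset

variable {K : Type*} [Field K]

theorem stmt9 {g : Type*} [AddCommGroup g] [Module K g] {V : Type*} [AddCommGroup V] [Module K V]
    (br : g →ₗ[K] g →ₗ[K] g →ₗ[K] g)
    (h3 : ThreeLeibnizRule (fun x y z : g => br x y z))
    (ρl : g →ₗ[K] g →ₗ[K] V →ₗ[K] V) (ρm : g →ₗ[K] V →ₗ[K] g →ₗ[K] V)
    (ρr : V →ₗ[K] g →ₗ[K] g →ₗ[K] V)
    (hrep : IsRep3 (fun x y z : g => br x y z) (fun x y u => ρl x y u)
      (fun x u y => ρm x u y) (fun u x y => ρr u x y))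
    (Φ : g →ₗ[K] g →ₗ[K] g →ₗ[K] V)
    (hΦ : Is2Cocycle (fun x y z : g => br x y z) (fun x y u => ρl x y u)
      (fun x u y => ρm x u y) (fun u x y => ρr u x y) (fun x y z => Φ x y z))
    (T : V →ₗ[K] g)
    (hT : IsTRB (fun x y z : g => br x y z) (fun x y u => ρl x y u)
      (fun x u y => ρm x u y) (fun u x y => ρr u x y) (fun x y z => Φ x y z)
      (fun u => T u))
    (ϖ : g →ₗ[K] V)
    (hcoc : ∀ x y z : g, ϖ (br x y z) = ρl x y (ϖ z) + ρm x (ϖ y) z + ρr (ϖ x) y z)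
    (S : V →ₗ[K] V)
    (hS1 : (LinearMap.id + ϖ ∘ₗ T) ∘ₗ S = LinearMap.id)
    (hS2 : S ∘ₗ (LinearMap.id + ϖ ∘ₗ T) = LinearMap.id) :
    IsTRB (fun x y z : g => br x y z) (fun x y u => ρl x y u)
      (fun x u y => ρm x u y) (fun u x y => ρr u x y) (fun x y z => Φ x y z)
      (fun u => T (S u)) := by
  intro u v w
  have h1 : ∀ x : V, S x + ϖ (T (S x)) = x := by
    intro x; have := LinearMap.congr_fun hS1 x; simpa using this
  have h2 : ∀ x : V, S (x + ϖ (T x)) = x := by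
    intro x; have := LinearMap.congr_fun hS2 x; simpa using this
  set A := T (S u) with hA
  set B := T (S v) with hB
  set C := T (S w) with hC
  set X : V := ρl A B (S w) + ρm A (S v) C + ρr (S u) B C + Φ A B C with hX
  have hTX : br A B C = T X := hT (S u) (S v) (S w)
  have harg : ρl A B w + ρm A v C + ρr u B C + Φ A B C = X + ϖ (T X) := by
    conv_lhs => rw [← h1 u, ← h1 v, ← h1 w]
    rw [← hA, ← hB, ← hC]
    simp only [map_add, LinearMap.add_apply]
    rw [← hTX, hcoc A B C, hX]
    abel
  rw [harg]
  show br A B C = T (S (X + ϖ (T X)))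
  rw [h2 X]
  exact hTX
end

section
/- Let T: V→g be a Φ-twisted Rota-Baxter operator and ϖ a T-admissible 1-cocycle (i.e. δϖ = 0 and Id_V + ϖ∘T is invertible). Then Id_V + ϖ∘T is an isomorphism of 3-Leibniz algebras from (V, [·,·,·]_T) to (V, [·,·,·]_{T_ϖ}), where T_ϖ = T∘(Id_V + ϖ∘T)^{-1}. -/
open Finset

variable {K : Type*} [Field K]

theorem stmt10 {g : Type*} [AddCommGroup g] [Module K g] {V : Type*} [AddCommGroup V] [Module K V]
    (br : g →ₗ[K] g →ₗ[K] g →ₗ[K] g)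
    (h3 : ThreeLeibnizRule (fun x y z : g => br x y z))
    (ρl : g →ₗ[K] g →ₗ[K] V →ₗ[K] V) (ρm : g →ₗ[K] V →ₗ[K] g →ₗ[K] V)
    (ρr : V →ₗ[K] g →ₗ[K] g →ₗ[K] V)
    (hrep : IsRep3 (fun x y z : g => br x y z) (fun x y u => ρl x y u)
      (fun x u y => ρm x u y) (fun u x y => ρr u x y))
    (Φ : g →ₗ[K] g →ₗ[K] g →ₗ[K] V)
    (hΦ : Is2Cocycle (fun x y z : g => br x y z) (fun x y u => ρl x y u)
      (fun x u y => ρm x u y) (fun u x y => ρr u x y) (fun x y z => Φ x y z))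
    (T : V →ₗ[K] g)
    (hT : IsTRB (fun x y z : g => br x y z) (fun x y u => ρl x y u)
      (fun x u y => ρm x u y) (fun u x y => ρr u x y) (fun x y z => Φ x y z)
      (fun u => T u))
    (ϖ : g →ₗ[K] V)
    (hcoc : ∀ x y z : g, ϖ (br x y z) = ρl x y (ϖ z) + ρm x (ϖ y) z + ρr (ϖ x) y z)
    (S : V →ₗ[K] V)
    (hS1 : (LinearMap.id + ϖ ∘ₗ T) ∘ₗ S = LinearMap.id)
    (hS2 : S ∘ₗ (LinearMap.id + ϖ ∘ₗ T) = LinearMap.id) :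
    Function.Bijective (fun u : V => u + ϖ (T u)) ∧
    ∀ u v w : V,
      (fun u : V => u + ϖ (T u))
          (ρl (T u) (T v) w + ρm (T u) v (T w) + ρr u (T v) (T w) + Φ (T u) (T v) (T w))
        = (let Tϖ : V → g := fun u => T (S u);
           let u' := u + ϖ (T u); let v' := v + ϖ (T v); let w' := w + ϖ (T w);
           ρl (Tϖ u') (Tϖ v') w' + ρm (Tϖ u') v' (Tϖ w') + ρr u' (Tϖ v') (Tϖ w')
             + Φ (Tϖ u') (Tϖ v') (Tϖ w')) := by

  have hSinv : ∀ u : V, S (u + ϖ (T u)) = u := fun u => by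
    have := LinearMap.congr_fun hS2 u
    simpa using this
  have hSinv' : ∀ u : V, S u + ϖ (T (S u)) = u := fun u => by
    have := LinearMap.congr_fun hS1 u
    simpa using this
  constructor
  · exact Function.bijective_iff_has_inverse.mpr ⟨S, fun u => hSinv u, fun u => hSinv' u⟩
  · intro u v w
    simp only
    have hTϖ : ∀ u : V, T (S (u + ϖ (T u))) = T u := fun u => by rw [hSinv]
    rw [hTϖ u, hTϖ v, hTϖ w]
    have hbr : ϖ (br (T u) (T v) (T w))
        = ρl (T u) (T v) (ϖ (T w)) + ρm (T u) (ϖ (T v)) (T w) + ρr (ϖ (T u)) (T v) (T w) :=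
      hcoc (T u) (T v) (T w)
    have hT' : T (ρl (T u) (T v) w + ρm (T u) v (T w) + ρr u (T v) (T w) + Φ (T u) (T v) (T w))
        = br (T u) (T v) (T w) := (hT u v w).symm
    rw [hT', hbr]
    simp only [map_add, LinearMap.add_apply]
    abel
end

section
/- Let T: V→g be a Φ-twisted Rota-Baxter operator on a 3-Leibniz algebra (g,[·,·,·]_g) with representation (V; ρ^l, ρ^m, ρ^r). Define ρ_T^l(u,v,x) := [Tu,Tv,x]_g − T(ρ^m(Tu,v,x) + ρ^r(u,Tv,x) + Φ(Tu,Tv,x)), ρ_T^m(u,x,v) := [Tu,x,Tv]_g − T(ρ^l(Tu,x,v) + ρ^r(u,x,Tv) + Φ(Tu,x,Tv)), and ρ_T^r(x,u,v) := [x,Tu,Tv]_g − T(ρ^l(x,Tu,v) + ρ^m(x,u,Tv) + Φ(x,Tu,Tv)). Then (g; ρ_T^l, ρ_T^m, ρ_T^r) is a representation of the 3-Leibniz algebra (V, [·,·,·]_T). -/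
open Finset

variable {K : Type*} [Field K]

set_option maxHeartbeats 2000000 in
theorem stmt13 {g : Type*} [AddCommGroup g] [Module K g] {V : Type*} [AddCommGroup V] [Module K V]
    (br : g →ₗ[K] g →ₗ[K] g →ₗ[K] g)
    (h3 : ThreeLeibnizRule (fun x y z : g => br x y z))
    (ρl : g →ₗ[K] g →ₗ[K] V →ₗ[K] V) (ρm : g →ₗ[K] V →ₗ[K] g →ₗ[K] V)
    (ρr : V →ₗ[K] g →ₗ[K] g →ₗ[K] V)
    (hrep : IsRep3 (fun x y z : g => br x y z) (fun x y u => ρl x y u)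
      (fun x u y => ρm x u y) (fun u x y => ρr u x y))
    (Φ : g →ₗ[K] g →ₗ[K] g →ₗ[K] V)
    (hΦ : Is2Cocycle (fun x y z : g => br x y z) (fun x y u => ρl x y u)
      (fun x u y => ρm x u y) (fun u x y => ρr u x y) (fun x y z => Φ x y z))
    (T : V →ₗ[K] g)
    (hT : IsTRB (fun x y z : g => br x y z) (fun x y u => ρl x y u)
      (fun x u y => ρm x u y) (fun u x y => ρr u x y) (fun x y z => Φ x y z)
      (fun u => T u)) :
    IsRep3
      (fun u v w : V =>
        ρl (T u) (T v) w + ρm (T u) v (T w) + ρr u (T v) (T w) + Φ (T u) (T v) (T w))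
      (fun u v x => br (T u) (T v) x - T (ρm (T u) v x + ρr u (T v) x + Φ (T u) (T v) x))
      (fun u x v => br (T u) x (T v) - T (ρl (T u) x v + ρr u x (T v) + Φ (T u) x (T v)))
      (fun x u v => br x (T u) (T v) - T (ρl x (T u) v + ρm x u (T v) + Φ x (T u) (T v))) := by
  
  have h3' : ∀ a b x y z : g, br a b (br x y z)
      = br (br a b x) y z + br x (br a b y) z + br x y (br a b z) := h3
  have r1 : ∀ (a b x y : g) (u : V), ρl a b (ρl x y u)
      = ρl (br a b x) y u + ρl x (br a b y) u + ρl x y (ρl a b u) := hrep.1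
  have r2 : ∀ (a b x : g) (u : V) (z : g), ρl a b (ρm x u z)
      = ρm (br a b x) u z + ρm x (ρl a b u) z + ρm x u (br a b z) := hrep.2.1
  have r3 : ∀ (a b : g) (u : V) (y z : g), ρl a b (ρr u y z)
      = ρr (ρl a b u) y z + ρr u (br a b y) z + ρr u y (br a b z) := hrep.2.2.1
  have r4 : ∀ (a : g) (u : V) (x y z : g), ρm a u (br x y z)
      = ρr (ρm a u x) y z + ρm x (ρm a u y) z + ρl x y (ρm a u z) := hrep.2.2.2.1
  have r5 : ∀ (u : V) (b x y z : g), ρr u b (br x y z)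
      = ρr (ρr u b x) y z + ρm x (ρr u b y) z + ρl x y (ρr u b z) := hrep.2.2.2.2
  have hT' : ∀ u v w : V, br (T u) (T v) (T w)
      = T (ρl (T u) (T v) w + ρm (T u) v (T w) + ρr u (T v) (T w) + Φ (T u) (T v) (T w)) := hT
  have hc : ∀ x1 y1 x2 y2 z : g, Φ x1 y1 (br x2 y2 z)
      = Φ x2 (br x1 y1 y2) z + Φ (br x1 y1 x2) y2 z + Φ x2 y2 (br x1 y1 z)
        - ρl x1 y1 (Φ x2 y2 z) + ρl x2 y2 (Φ x1 y1 z) + ρm x2 (Φ x1 y1 y2) z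
        + ρr (Φ x1 y1 x2) y2 z := by
    intro x1 y1 x2 y2 z
    have h := hΦ x1 y1 x2 y2 z
    refine eq_of_sub_eq_zero ?_
    rw [← h]; abel
  refine ⟨?_, ?_, ?_, ?_, ?_⟩
  · intro a b x y u
    beta_reduce
    rw [← hT' a b x, ← hT' a b y]
    simp only [map_add, map_sub, LinearMap.add_apply, LinearMap.sub_apply]
    rw [hT' a b (ρm (T x) y u), hT' a b (ρr x (T y) u), hT' a b (Φ (T x) (T y) u),
      hT' x y (ρm (T a) b u), hT' x y (ρr a (T b) u), hT' x y (Φ (T a) (T b) u),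
      h3' (T a) (T b) (T x) (T y) u,
      r2 (T a) (T b) (T x) y u, r3 (T a) (T b) x (T y) u,
      r4 (T a) b (T x) (T y) u, r5 a (T b) (T x) (T y) u,
      hc (T a) (T b) (T x) (T y) u]
    simp only [map_add, map_sub]
    abel
  · intro a b x u z
    beta_reduce
    rw [← hT' a b x, ← hT' a b z]
    simp only [map_add, map_sub, LinearMap.add_apply, LinearMap.sub_apply]
    rw [hT' a b (ρl (T x) u z), hT' a b (ρr x u (T z)), hT' a b (Φ (T x) u (T z)),
      hT' x (ρm (T a) b u) z, hT' x (ρr a (T b) u) z, hT' x (Φ (T a) (T b) u) z,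
      h3' (T a) (T b) (T x) u (T z),
      r1 (T a) (T b) (T x) u z, r3 (T a) (T b) x u (T z),
      r4 (T a) b (T x) u (T z), r5 a (T b) (T x) u (T z),
      hc (T a) (T b) (T x) u (T z)]
    simp only [map_add, map_sub]
    abel
  · intro a b u y z
    beta_reduce
    rw [← hT' a b y, ← hT' a b z]
    simp only [map_add, map_sub, LinearMap.add_apply, LinearMap.sub_apply]
    rw [hT' a b (ρl u (T y) z), hT' a b (ρm u y (T z)), hT' a b (Φ u (T y) (T z)),
      hT' (ρm (T a) b u) y z, hT' (ρr a (T b) u) y z, hT' (Φ (T a) (T b) u) y z,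
      h3' (T a) (T b) u (T y) (T z),
      r1 (T a) (T b) u (T y) z, r2 (T a) (T b) u y (T z),
      r4 (T a) b u (T y) (T z), r5 a (T b) u (T y) (T z),
      hc (T a) (T b) u (T y) (T z)]
    simp only [map_add, map_sub]
    abel
  · intro a u x y z
    beta_reduce
    rw [← hT' x y z]
    simp only [map_add, map_sub, LinearMap.add_apply, LinearMap.sub_apply]
    rw [hT' (ρl (T a) u x) y z, hT' (ρr a u (T x)) y z, hT' (Φ (T a) u (T x)) y z,
      hT' x (ρl (T a) u y) z, hT' x (ρr a u (T y)) z, hT' x (Φ (T a) u (T y)) z,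
      hT' x y (ρl (T a) u z), hT' x y (ρr a u (T z)), hT' x y (Φ (T a) u (T z)),
      h3' (T a) u (T x) (T y) (T z),
      r1 (T a) u (T x) (T y) z, r2 (T a) u (T x) y (T z), r3 (T a) u x (T y) (T z),
      r5 a u (T x) (T y) (T z),
      hc (T a) u (T x) (T y) (T z)]
    simp only [map_add, map_sub]
    abel
  · intro u b x y z
    beta_reduce
    rw [← hT' x y z]
    simp only [map_add, map_sub, LinearMap.add_apply, LinearMap.sub_apply]
    rw [hT' (ρl u (T b) x) y z, hT' (ρm u b (T x)) y z, hT' (Φ u (T b) (T x)) y z,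
      hT' x (ρl u (T b) y) z, hT' x (ρm u b (T y)) z, hT' x (Φ u (T b) (T y)) z,
      hT' x y (ρl u (T b) z), hT' x y (ρm u b (T z)), hT' x y (Φ u (T b) (T z)),
      h3' u (T b) (T x) (T y) (T z),
      r1 u (T b) (T x) (T y) z, r2 u (T b) (T x) y (T z), r3 u (T b) x (T y) (T z),
      r4 u b (T x) (T y) (T z),
      hc u (T b) (T x) (T y) (T z)]
    simp only [map_add, map_sub]
    abel
end

section
/- Let T: V→g be a Φ-twisted Rota-Baxter operator. For a,b ∈ g, define ℘(a⊗b): V→g by ℘(a⊗b)(u) = Tρ^l(a,b,u) + TΦ(a,b,Tu) − [a,b,Tu]_g. Then ℘(a⊗b) is a 1-cocycle of the 3-Leibniz algebra (V,[·,·,·]_T) with coefficients in the representation (g; ρ_T^l, ρ_T^m, ρ_T^r). -/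
open Finset

variable {K : Type*} [Field K]

theorem stmt14 {g : Type*} [AddCommGroup g] [Module K g] {V : Type*} [AddCommGroup V] [Module K V]
    (br : g →ₗ[K] g →ₗ[K] g →ₗ[K] g)
    (h3 : ThreeLeibnizRule (fun x y z : g => br x y z))
    (ρl : g →ₗ[K] g →ₗ[K] V →ₗ[K] V) (ρm : g →ₗ[K] V →ₗ[K] g →ₗ[K] V)
    (ρr : V →ₗ[K] g →ₗ[K] g →ₗ[K] V)
    (hrep : IsRep3 (fun x y z : g => br x y z) (fun x y u => ρl x y u)
      (fun x u y => ρm x u y) (fun u x y => ρr u x y))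
    (Φ : g →ₗ[K] g →ₗ[K] g →ₗ[K] V)
    (hΦ : Is2Cocycle (fun x y z : g => br x y z) (fun x y u => ρl x y u)
      (fun x u y => ρm x u y) (fun u x y => ρr u x y) (fun x y z => Φ x y z))
    (T : V →ₗ[K] g)
    (hT : IsTRB (fun x y z : g => br x y z) (fun x y u => ρl x y u)
      (fun x u y => ρm x u y) (fun u x y => ρr u x y) (fun x y z => Φ x y z)
      (fun u => T u))
    (a b : g) :
    ∀ u v w : V,
      (fun u : V => T (ρl a b u) + T (Φ a b (T u)) - br a b (T u))
          (ρl (T u) (T v) w + ρm (T u) v (T w) + ρr u (T v) (T w) + Φ (T u) (T v) (T w))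
        = (br (T u) (T v) ((fun u : V => T (ρl a b u) + T (Φ a b (T u)) - br a b (T u)) w)
            - T (ρm (T u) v ((fun u : V => T (ρl a b u) + T (Φ a b (T u)) - br a b (T u)) w)
              + ρr u (T v) ((fun u : V => T (ρl a b u) + T (Φ a b (T u)) - br a b (T u)) w)
              + Φ (T u) (T v) ((fun u : V => T (ρl a b u) + T (Φ a b (T u)) - br a b (T u)) w)))
          + (br (T u) ((fun u : V => T (ρl a b u) + T (Φ a b (T u)) - br a b (T u)) v) (T w)
            - T (ρl (T u) ((fun u : V => T (ρl a b u) + T (Φ a b (T u)) - br a b (T u)) v) w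
              + ρr u ((fun u : V => T (ρl a b u) + T (Φ a b (T u)) - br a b (T u)) v) (T w)
              + Φ (T u) ((fun u : V => T (ρl a b u) + T (Φ a b (T u)) - br a b (T u)) v) (T w)))
          + (br ((fun u : V => T (ρl a b u) + T (Φ a b (T u)) - br a b (T u)) u) (T v) (T w)
            - T (ρl ((fun u : V => T (ρl a b u) + T (Φ a b (T u)) - br a b (T u)) u) (T v) w
              + ρm ((fun u : V => T (ρl a b u) + T (Φ a b (T u)) - br a b (T u)) u) v (T w)
              + Φ ((fun u : V => T (ρl a b u) + T (Φ a b (T u)) - br a b (T u)) u) (T v) (T w))) := by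

  intro u v w
  obtain ⟨h1, h2, h3', h4, h5⟩ := hrep
  have hphi : (Φ a b) (br (T u) (T v) (T w))
      = Φ (T u) (br a b (T v)) (T w) + Φ (br a b (T u)) (T v) (T w)
        + Φ (T u) (T v) (br a b (T w)) - ρl a b (Φ (T u) (T v) (T w))
        + ρl (T u) (T v) (Φ a b (T w)) + ρm (T u) (Φ a b (T v)) (T w)
        + ρr (Φ a b (T u)) (T v) (T w) := by
    have h := hΦ a b (T u) (T v) (T w)
    apply eq_of_sub_eq_zero
    rw [← h]; abel
  simp only [] at h1 h2 h3' h4 h5 ⊢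
  have hT0 := hT u v w
  have e1 := hT u v (ρl a b w + Φ a b (T w))
  have e2 := hT u (ρl a b v + Φ a b (T v)) w
  have e3 := hT (ρl a b u + Φ a b (T u)) v w
  have hbr := h3 a b (T u) (T v) (T w)
  simp only [] at hT0 e1 e2 e3 hbr
  rw [← map_add T (ρl a b u) (Φ a b (T u)), ← map_add T (ρl a b v) (Φ a b (T v)),
    ← map_add T (ρl a b w) (Φ a b (T w)), ← hT0]
  simp only [map_sub, LinearMap.sub_apply]
  rw [e1, e2, e3]
  simp only [map_add, LinearMap.add_apply, map_sub, LinearMap.sub_apply]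
  rw [h1 a b (T u) (T v) w, h2 a b (T u) v (T w), h3' a b u (T v) (T w), hphi, hbr]
  simp only [map_add, LinearMap.add_apply, map_sub, LinearMap.sub_apply]
  abel
end
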